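/- arXiv:1604.03759 — 3 statements merged into one kernel-verified Lean document; each statement's English description precedes it below -/
import Mathlib

section
/- Let α > 0, Ḣ ≠ 0, Ḣc ≠ 0 be real. Define D = α²(Ḣ⁴ − Ḣc⁴)² + 4Ḣc⁴ and z₋ = (α(Ḣ⁴ − Ḣc⁴) + 2Ḣ² − √D) / (2(1 + αḢ²)). Then z₋ > 0 if Ḣ² > Ḣc², and z₋ < 0 if Ḣ² < Ḣc². -/
/-- z₋, the smaller root of the Lopatinskiĭ quadratic, is positive when Ḣ² > Ḣc²
and negative when Ḣ² < Ḣc². -/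
theorem stmt_2 (α H Hc : ℝ) (hα : 0 < α) (hH : H ≠ 0) (hHc : Hc ≠ 0)
    (D zm : ℝ) (hD : D = α^2 * (H^4 - Hc^4)^2 + 4 * Hc^4)
    (hzm : zm = (α * (H^4 - Hc^4) + 2 * H^2 - Real.sqrt D) / (2 * (1 + α * H^2))) :
    (Hc^2 < H^2 → 0 < zm) ∧ (H^2 < Hc^2 → zm < 0) := by
  have hH2 : 0 < H^2 := by positivity
  have hHc2 : 0 < Hc^2 := by positivity
  have hDpos : 0 < D := by rw [hD]; positivity
  have hs : Real.sqrt D ^ 2 = D := Real.sq_sqrt hDpos.le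
  have hs0 : 0 ≤ Real.sqrt D := Real.sqrt_nonneg D
  have hden : 0 < 2 * (1 + α * H^2) := by nlinarith
  constructor
  · intro h
    have hH4 : Hc^4 < H^4 := by nlinarith
    have hS : 0 < α * (H^4 - Hc^4) + 2 * H^2 := by nlinarith
    have : Real.sqrt D < α * (H^4 - Hc^4) + 2 * H^2 := by
      rw [show Real.sqrt D < α * (H^4 - Hc^4) + 2 * H^2 ↔
        D < (α * (H^4 - Hc^4) + 2 * H^2)^2 from Real.sqrt_lt' hS]
      nlinarith
    rw [hzm]
    apply div_pos _ hden
    linarith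
  · intro h
    have hH4 : H^4 < Hc^4 := by nlinarith
    have : α * (H^4 - Hc^4) + 2 * H^2 < Real.sqrt D := by
      nlinarith [sq_nonneg (Real.sqrt D + (α * (H^4 - Hc^4) + 2 * H^2))]
    rw [hzm]
    apply div_neg_of_neg_of_pos _ hden
    linarith
end

section
/- Let ρ̇ > 0, α > 0, Ḣ ∈ ℝ with αḢ² ≠ 1, η ∈ ℝ. At K = Ḣ²/ρ̇ (the zero of a₁₂), the γ-derivatives of the symbol coefficients satisfy ∂_γ a₁₂ = −2ρ̇ ≠ 0 and ∂_γ a₂₁ = −((αḢ² − 1)² + αḢ² + 1)/(α²Ḣ⁶) ≠ 0, where ∂_γ a₂₁ is computed as (−(αρ̇K − 1)²Ḣ² − αρ̇²K² − ρ̇K)/k² with k = (1 − αρ̇K)Ḣ² − ρ̇K, evaluated at ρ̇K = Ḣ². -/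
/-- At the degenerate point K = Ḣ²/ρ̇ (where a₁₂ = 0), the γ-derivatives of the
plasma-block symbol coefficients satisfy ∂_γ a₁₂ = −2ρ̇ ≠ 0 and
∂_γ a₂₁ = −((αḢ²−1)² + αḢ² + 1)/(α²Ḣ⁶) ≠ 0 (using Ḣ ≠ 0). -/
theorem stmt_10 (ρ α H η : ℝ) (hρ : 0 < ρ) (hα : 0 < α) (hne : α * H^2 ≠ 1) (hH : H ≠ 0)
    (K k : ℝ) (hK : K = H^2 / ρ) (hk : k = (1 - α * ρ * K) * H^2 - ρ * K) :
    (-((K * ρ + H^2) / K) = -(2 * ρ) ∧ -((K * ρ + H^2) / K) ≠ 0) ∧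
    ((-(α * ρ * K - 1)^2 * H^2 - α * ρ^2 * K^2 - ρ * K) / k^2
        = -(((α * H^2 - 1)^2 + α * H^2 + 1) / (α^2 * H^6)) ∧
      (-(α * ρ * K - 1)^2 * H^2 - α * ρ^2 * K^2 - ρ * K) / k^2 ≠ 0) := by
  have hρ' : ρ ≠ 0 := ne_of_gt hρ
  have hα' : α ≠ 0 := ne_of_gt hα
  have hρK : ρ * K = H^2 := by rw [hK]; field_simp
  have hK0 : K ≠ 0 := by
    rw [hK]; exact div_ne_zero (pow_ne_zero 2 hH) hρ'
  have hH2 : H^2 ≠ 0 := pow_ne_zero 2 hH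
  have h1 : -((K * ρ + H^2) / K) = -(2 * ρ) := by
    congr 1; rw [div_eq_iff hK0]; nlinarith [hρK]
  have hk' : k = -(α * H^4) := by
    rw [hk]
    have : α * ρ * K = α * H^2 := by rw [mul_assoc, hρK]
    rw [this]
    have h2 : ρ * K = H^2 := hρK
    ring_nf
    nlinarith [hρK]
  have hpos : (α * H^2 - 1)^2 + α * H^2 + 1 > 0 := by positivity
  have h2 : (-(α * ρ * K - 1)^2 * H^2 - α * ρ^2 * K^2 - ρ * K) / k^2
      = -(((α * H^2 - 1)^2 + α * H^2 + 1) / (α^2 * H^6)) := by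
    have hnum : -(α * ρ * K - 1)^2 * H^2 - α * ρ^2 * K^2 - ρ * K
        = -(H^2 * ((α * H^2 - 1)^2 + α * H^2 + 1)) := by
      have : α * ρ * K = α * H^2 := by rw [mul_assoc, hρK]
      nlinarith [hρK, this]
    rw [hnum, hk']
    rw [div_eq_iff (pow_ne_zero 2 (neg_ne_zero.mpr (by positivity)))]
    field_simp
  refine ⟨⟨h1, ?_⟩, h2, ?_⟩
  · rw [h1]; simp; exact hρ'
  · rw [h2]
    have : α^2 * H^6 > 0 := by positivity
    simp only [neg_ne_zero]
    exact ne_of_gt (div_pos hpos this)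
end

section
/- Let ω₁, ω₂, m₁, m₂, μ ∈ ℂ with μ ≠ 0, m₁ ≠ 0, m₁ ≠ ω₁, ω₂ ≠ 0, ω₁² = m₁² − m₂², and let τ ∈ ℂ with ετ ≠ 0. Define the 4×4 block matrix T⁻¹ = diag(T̃⁻¹, [[ω₂, ω₂],[ετ, −ετ]]) where T̃⁻¹ = [[μ(m₁−ω₁), −μ m₂],[μ m₂, μ(m₁−ω₁)]]. Then det T̃⁻¹ = 2m₁ μ²(m₁ − ω₁) ≠ 0, and T · diag([[m₁, −m₂],[m₂, −m₁]], [[0, a₃₄],[a₄₃, 0]]) · T⁻¹ = diag([[−ω₁, −2m₂],[0, ω₁]], [[−ω₂, 0],[0, ω₂]]), where T = (T⁻¹)⁻¹ and ω₂² = a₃₄ a₄₃. -/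
open Matrix

/-- The explicit conjugation used near the pole μ = 0: with
T⁻¹ = diag(T̃⁻¹, [[ω₂,ω₂],[ετ,−ετ]]), T̃⁻¹ = [[μ(m₁−ω₁), −μm₂],[μm₂, μ(m₁−ω₁)]],
one has det T̃⁻¹ = 2m₁μ²(m₁−ω₁) ≠ 0 and
T·diag([[m₁,−m₂],[m₂,−m₁]], [[0,a₃₄],[a₄₃,0]])·T⁻¹
  = diag([[−ω₁,−2m₂],[0,ω₁]], [[−ω₂,0],[0,ω₂]]),
where T = (T⁻¹)⁻¹, ω₂² = a₃₄a₄₃ (and, as in the paper, a₄₃ = −ετ). -/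
theorem stmt_15 (ω1 ω2 m1 m2 μ : ℂ) (hμ : μ ≠ 0) (hm1 : m1 ≠ 0) (hm1ω : m1 ≠ ω1)
    (hω2 : ω2 ≠ 0) (hω1 : ω1^2 = m1^2 - m2^2)
    (ε : ℝ) (τ : ℂ) (hετ : (ε : ℂ) * τ ≠ 0)
    (a34 a43 : ℂ) (hω2sq : ω2^2 = a34 * a43) (ha43 : a43 = -((ε : ℂ) * τ))
    (Tinv A : Matrix (Fin 4) (Fin 4) ℂ)
    (hTinv : Tinv = !![μ * (m1 - ω1), -(μ * m2), 0, 0;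
                       μ * m2, μ * (m1 - ω1), 0, 0;
                       0, 0, ω2, ω2;
                       0, 0, (ε : ℂ) * τ, -((ε : ℂ) * τ)])
    (hA : A = !![m1, -m2, 0, 0; m2, -m1, 0, 0; 0, 0, 0, a34; 0, 0, a43, 0]) :
    (!![μ * (m1 - ω1), -(μ * m2); μ * m2, μ * (m1 - ω1)]).det
        = 2 * m1 * μ^2 * (m1 - ω1) ∧
      (!![μ * (m1 - ω1), -(μ * m2); μ * m2, μ * (m1 - ω1)]).det ≠ 0 ∧
      Tinv⁻¹ * A * Tinv
        = !![-ω1, -(2 * m2), 0, 0; 0, ω1, 0, 0; 0, 0, -ω2, 0; 0, 0, 0, ω2] := by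
  have hm2 : m2^2 = m1^2 - ω1^2 := by linear_combination hω1
  have hd2 : (!![μ * (m1 - ω1), -(μ * m2); μ * m2, μ * (m1 - ω1)]).det
      = 2 * m1 * μ^2 * (m1 - ω1) := by
    rw [Matrix.det_fin_two_of]
    linear_combination μ^2 * hm2
  have hsub : m1 - ω1 ≠ 0 := sub_ne_zero.mpr hm1ω
  have hdne : (2:ℂ) * m1 * μ^2 * (m1 - ω1) ≠ 0 :=
    mul_ne_zero (mul_ne_zero (mul_ne_zero two_ne_zero hm1) (pow_ne_zero 2 hμ)) hsub
  have hdet : Tinv.det ≠ 0 := by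
    have : Tinv.det = (2 * m1 * μ^2 * (m1 - ω1)) * (-2 * ω2 * ((ε:ℂ) * τ)) := by
      rw [hTinv]
      simp [Matrix.det_succ_row_zero, Fin.sum_univ_succ, Fin.succAbove, Matrix.vecHead, Matrix.vecTail]
      ring_nf
      linear_combination (-2 * ω2 * (ε:ℂ) * τ * μ^2) * hm2
    rw [this]
    exact mul_ne_zero hdne (mul_ne_zero (mul_ne_zero (neg_ne_zero.mpr two_ne_zero) hω2) hετ)
  refine ⟨hd2, hd2 ▸ hdne, ?_⟩
  have hcomm : A * Tinv = Tinv * !![-ω1, -(2 * m2), 0, 0; 0, ω1, 0, 0; 0, 0, -ω2, 0; 0, 0, 0, ω2] := by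
    subst hTinv hA
    ext i j
    fin_cases i <;> fin_cases j <;>
      simp [Matrix.mul_apply, Fin.sum_univ_four, Matrix.vecHead, Matrix.vecTail]
    all_goals first
      | ring1
      | linear_combination μ * hm2
      | linear_combination -μ * hm2
      | linear_combination hω2sq + a34 * ha43
      | linear_combination -hω2sq - a34 * ha43
      | linear_combination ω2 * ha43
  rw [Matrix.mul_assoc, hcomm, ← Matrix.mul_assoc,
    Matrix.nonsing_inv_mul _ (Ne.isUnit hdet), one_mul]
end
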